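/- Let V be a finite-dimensional real vector space, k an integer, and ψ a bilinear form on V with ψ(w, v) = (-1)^k ψ(v, w) for all v, w. Suppose V_ℂ = ⊕_{p+q=k} V^{p,q} and V_ℂ = ⊕_{p+q=k} W^{p,q} are two Hodge structures of weight k on V, both polarized by ψ, with dim_ℂ V^{p,q} = dim_ℂ W^{p,q} for all (p,q). Then there exists a real-linear automorphism g of V with ψ(g v, g w) = ψ(v, w) for all v, w ∈ V, whose complexification carries V^{p,q} onto W^{p,q} for every (p,q). (Transitivity of the real isometry group G_ℝ on the period domain D.) -/

import Mathlib

open TensorProduct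

instance : RingHomSurjective (starRingEnd ℂ) :=
  ⟨fun x => ⟨star x, star_star x⟩⟩

/-- Conjugation on the complexification `ℂ ⊗[ℝ] V`, `z ⊗ v ↦ z̄ ⊗ v`,
as a `starRingEnd ℂ`-semilinear map. -/
noncomputable def conjC (V : Type*) [AddCommGroup V] [Module ℝ V] :
    (ℂ ⊗[ℝ] V) →ₛₗ[starRingEnd ℂ] (ℂ ⊗[ℝ] V) where
  toFun := TensorProduct.map Complex.conjAe.toLinearMap LinearMap.id
  map_add' := map_add _
  map_smul' := by
    intro z x
    induction x using TensorProduct.induction_on with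
    | zero => simp
    | tmul c v =>
        simp [TensorProduct.smul_tmul', TensorProduct.map_tmul, map_mul]
    | add x y hx hy =>
        simp only [smul_add, map_add]
        exact congrArg₂ (· + ·) hx hy

/-- The natural inclusion `V → ℂ ⊗[ℝ] V`, `v ↦ 1 ⊗ v`. -/
noncomputable def iotaC (V : Type*) [AddCommGroup V] [Module ℝ V] :
    V →ₗ[ℝ] ℂ ⊗[ℝ] V :=
  TensorProduct.mk ℝ ℂ V 1

section Basics
variable {V : Type*} [AddCommGroup V] [Module ℝ V]

lemma conjC_tmul (z : ℂ) (v : V) : conjC V (z ⊗ₜ[ℝ] v) = (starRingEnd ℂ z) ⊗ₜ[ℝ] v := rfl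

lemma iotaC_apply (v : V) : iotaC V v = (1 : ℂ) ⊗ₜ[ℝ] v := rfl

lemma conjC_conjC (x : ℂ ⊗[ℝ] V) : conjC V (conjC V x) = x := by
  induction x using TensorProduct.induction_on with
  | zero => simp
  | tmul z v => simp [conjC_tmul]
  | add a b ha hb => simp only [map_add, ha, hb]

lemma conjC_iotaC (v : V) : conjC V (iotaC V v) = iotaC V v := by
  simp [iotaC_apply, conjC_tmul]

/-- real part map -/
noncomputable def reC (V : Type*) [AddCommGroup V] [Module ℝ V] : (ℂ ⊗[ℝ] V) →ₗ[ℝ] V :=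
  (TensorProduct.lid ℝ V).toLinearMap ∘ₗ TensorProduct.map Complex.reLm LinearMap.id

noncomputable def imC (V : Type*) [AddCommGroup V] [Module ℝ V] : (ℂ ⊗[ℝ] V) →ₗ[ℝ] V :=
  (TensorProduct.lid ℝ V).toLinearMap ∘ₗ TensorProduct.map Complex.imLm LinearMap.id

lemma reC_tmul (z : ℂ) (v : V) : reC V (z ⊗ₜ[ℝ] v) = z.re • v := by
  simp [reC]

lemma imC_tmul (z : ℂ) (v : V) : imC V (z ⊗ₜ[ℝ] v) = z.im • v := by
  simp [imC]

lemma reC_iotaC (v : V) : reC V (iotaC V v) = v := by simp [iotaC_apply, reC_tmul]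

lemma iotaC_injective : Function.Injective (iotaC V) := by
  intro a b h
  have := congrArg (reC V) h
  simpa [reC_iotaC] using this

lemma decompC (x : ℂ ⊗[ℝ] V) :
    x = iotaC V (reC V x) + Complex.I • iotaC V (imC V x) := by
  induction x using TensorProduct.induction_on with
  | zero => simp
  | tmul z v =>
      rw [reC_tmul, imC_tmul]
      simp only [iotaC_apply, map_smul]
      rw [TensorProduct.smul_tmul', TensorProduct.smul_tmul', TensorProduct.smul_tmul']
      rw [← TensorProduct.add_tmul]
      congr 1
      push_cast
      simp [Complex.ext_iff]
  | add a b ha hb =>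
      simp only [map_add, smul_add]
      conv_lhs => rw [ha, hb]
      abel

lemma iotaC_reC_of_fixed {x : ℂ ⊗[ℝ] V} (hx : conjC V x = x) : iotaC V (reC V x) = x := by
  have hd := decompC x
  set a := iotaC V (reC V x)
  set b := iotaC V (imC V x)
  have hcx : conjC V x = a - Complex.I • b := by
    rw [hd]
    simp only [map_add, LinearMap.map_smulₛₗ, conjC_iotaC, a, b]
    simp [Complex.conj_I, sub_eq_add_neg, neg_smul]
  have h2 : (Complex.I • b) + (Complex.I • b) = 0 := by
    have := hcx.symm.trans hx
    rw [hd] at this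
    -- a - I•b = a + I•b
    have :  a + Complex.I • b - (a - Complex.I • b) = 0 := by rw [this]; abel
    rw [← this]; abel
  have hb0 : Complex.I • b = 0 := by
    have : (2 : ℂ) • (Complex.I • b) = 0 := by rw [two_smul]; exact h2
    have := congrArg (fun y => (2 : ℂ)⁻¹ • y) this
    simpa [smul_smul] using this
  have : b = 0 := by
    have := congrArg (fun y => (-Complex.I) • y) hb0
    simpa [smul_smul, Complex.I_mul_I] using this
  rw [hd, this]; simp

end Basics


section Gram
variable {E : Type*} [AddCommGroup E] [Module ℂ E] [FiniteDimensional ℂ E]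

/-- From a positive-definite hermitian sesquilinear form (linear in the second variable),
produce a basis whose Gram matrix is the identity. -/
lemma exists_gram_basis (Φ : E → E → ℂ)
    (hadd : ∀ x y z, Φ x (y + z) = Φ x y + Φ x z)
    (hsmul : ∀ (c : ℂ) x y, Φ x (c • y) = c * Φ x y)
    (hconj : ∀ x y, starRingEnd ℂ (Φ y x) = Φ x y)
    (hpos : ∀ x, x ≠ 0 → 0 < (Φ x x).re) :
    ∃ b : Module.Basis (Fin (Module.finrank ℂ E)) ℂ E,
      ∀ i j, Φ (b i) (b j) = if i = j then 1 else 0 := by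
  letI core : InnerProductSpace.Core ℂ E :=
  { inner := Φ
    conj_inner_symm := fun x y => hconj x y
    re_inner_nonneg := by
      intro x
      rcases eq_or_ne x 0 with rfl | hx
      · have : Φ 0 (0 : E) = 0 := by
          have := hsmul 0 0 0
          simpa using this
        simp [this]
      · exact le_of_lt (hpos x hx)
    add_left := by
      intro x y z
      show Φ (x + y) z = Φ x z + Φ y z
      rw [← hconj, ← hconj x z, ← hconj y z, hadd]
      simp [map_add]
    smul_left := by
      intro x y r
      show Φ (r • x) y = (starRingEnd ℂ) r * Φ x y
      rw [← hconj, hsmul, map_mul, hconj x y]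
    definite := by
      intro x hx
      by_contra h
      have h2 := hpos x h
      have hx' : Φ x x = 0 := hx
      rw [hx'] at h2
      simp at h2 }
  letI : NormedAddCommGroup E := core.toNormedAddCommGroup
  letI : InnerProductSpace ℂ E := InnerProductSpace.ofCore core.toCore
  have hinner : ∀ x y : E, (inner ℂ x y : ℂ) = Φ x y := fun x y => rfl
  obtain ⟨b, hb⟩ : ∃ b : OrthonormalBasis (Fin (Module.finrank ℂ E)) ℂ E, True :=
    ⟨stdOrthonormalBasis ℂ E, trivial⟩
  refine ⟨b.toBasis, fun i j => ?_⟩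
  have := orthonormal_iff_ite.mp b.orthonormal i j
  rw [hinner] at this
  simpa using this
end Gram

section GramFixed
variable {E : Type*} [AddCommGroup E] [Module ℂ E] [Module ℝ E] [IsScalarTower ℝ ℂ E]
  [FiniteDimensional ℂ E]

lemma exists_gram_basis_fixed (Φ : E → E → ℂ)
    (hadd : ∀ x y z, Φ x (y + z) = Φ x y + Φ x z)
    (hsmul : ∀ (c : ℂ) x y, Φ x (c • y) = c * Φ x y)
    (hconj : ∀ x y, starRingEnd ℂ (Φ y x) = Φ x y)
    (hpos : ∀ x, x ≠ 0 → 0 < (Φ x x).re)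
    (σ : E → E)
    (hσadd : ∀ x y, σ (x + y) = σ x + σ y)
    (hσsmul : ∀ (c : ℂ) x, σ (c • x) = starRingEnd ℂ c • σ x)
    (hσinv : ∀ x, σ (σ x) = x)
    (hσΦ : ∀ x y, Φ (σ x) (σ y) = starRingEnd ℂ (Φ x y)) :
    ∃ b : Module.Basis (Fin (Module.finrank ℂ E)) ℂ E,
      (∀ i j, Φ (b i) (b j) = if i = j then 1 else 0) ∧ ∀ i, σ (b i) = b i := by
  classical
  haveI : FiniteDimensional ℝ E := Module.Finite.trans ℂ E
  -- the linear-in-second-variable packaging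
  let L : E → E →ₗ[ℂ] ℂ := fun x =>
    { toFun := Φ x, map_add' := hadd x, map_smul' := fun c y => hsmul c x y }
  have hσ0 : σ 0 = 0 := by
    have := hσsmul 0 0
    simpa using this
  have hrsmul : ∀ (r : ℝ) (x : E), r • x = (r : ℂ) • x := fun r x => by
    rw [← smul_one_smul ℂ r x, Complex.real_smul, mul_one]
  -- the real subspace of σ-fixed points
  let W : Submodule ℝ E :=
  { carrier := {x | σ x = x}
    add_mem' := by intro a b ha hb; simp only [Set.mem_setOf_eq] at *; rw [hσadd, ha, hb]
    zero_mem' := hσ0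
    smul_mem' := by
      intro r x hx
      simp only [Set.mem_setOf_eq] at *
      rw [hrsmul, hσsmul, hx]
      congr 1
      simp [Complex.conj_ofReal] }
  have hWfix : ∀ x : W, σ (x : E) = (x : E) := fun x => x.2
  -- Φ is real-valued on W
  have hreal : ∀ x y : W, Φ (x : E) (y : E) = ((Φ (x : E) (y : E)).re : ℂ) := by
    intro x y
    have h1 : starRingEnd ℂ (Φ (x : E) (y : E)) = Φ (x : E) (y : E) := by
      rw [← hσΦ, hWfix, hWfix]
    exact (Complex.conj_eq_iff_re.mp h1).symm
  have haddl : ∀ x y z : E, Φ (x + y) z = Φ x z + Φ y z := by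
    intro x y z
    rw [← hconj, ← hconj x z, ← hconj y z, hadd]
    simp [map_add]
  -- real inner product on W
  letI core : InnerProductSpace.Core ℝ W :=
  { inner := fun u v => (Φ (u : E) (v : E)).re
    conj_inner_symm := by
      intro x y
      simp only [starRingEnd_apply, star_trivial]
      rw [← hconj (x : E) (y : E)]
      simp
    re_inner_nonneg := by
      intro x
      rcases eq_or_ne x 0 with rfl | hx
      · have h0 : Φ (0 : E) (0 : E) = 0 := by
          simpa using hsmul 0 (0 : E) 0
        simp [h0]
      · have : ((x : E)) ≠ 0 := fun h => hx (Subtype.ext h)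
        exact le_of_lt (hpos _ this)
    add_left := by
      intro x y z
      simp only [Submodule.coe_add]
      rw [haddl]
      simp [Complex.add_re]
    smul_left := by
      intro x y r
      simp only [Submodule.coe_smul, starRingEnd_apply, star_trivial]
      rw [hrsmul]
      have : Φ (((r : ℂ) • (x : E))) (y : E) = starRingEnd ℂ (r : ℂ) * Φ (x : E) (y : E) := by
        rw [← hconj, hsmul, map_mul, hconj (x : E) (y : E)]
      rw [this]
      simp [Complex.conj_ofReal]
    definite := by
      intro x hx
      by_contra h
      have hx0 : ((x : E)) ≠ 0 := fun h' => h (Subtype.ext h')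
      have h2 := hpos _ hx0
      change (Φ (x : E) (x : E)).re = 0 at hx
      rw [hx] at h2
      simp at h2 }
  letI : NormedAddCommGroup W := core.toNormedAddCommGroup
  letI : InnerProductSpace ℝ W := InnerProductSpace.ofCore core.toCore
  set n := Module.finrank ℝ W with hn
  let w : OrthonormalBasis (Fin n) ℝ W := stdOrthonormalBasis ℝ W
  have hwg : ∀ i j, Φ ((w i : E)) ((w j : E)) = if i = j then 1 else 0 := by
    intro i j
    have h1 := orthonormal_iff_ite.mp w.orthonormal i j
    have h2 : (Φ ((w i : E)) ((w j : E))).re = if i = j then 1 else 0 := h1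
    rw [hreal (w i) (w j), h2]
    split <;> simp
  -- the ℂ-family
  let c : Fin n → E := fun i => (w i : E)
  have hindep : LinearIndependent ℂ c := by
    rw [Fintype.linearIndependent_iff]
    intro g hg j
    have := congrArg (L (c j)) hg
    rw [map_sum, map_zero] at this
    simp only [map_smul, smul_eq_mul] at this
    have heval : ∀ i, g i * L (c j) (c i) = if i = j then g i else 0 := by
      intro i
      have : L (c j) (c i) = if j = i then 1 else 0 := hwg j i
      rw [this]
      by_cases h : i = j
      · subst h; simp
      · simp [h, Ne.symm h]
    rw [Finset.sum_congr rfl (fun i _ => heval i)] at this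
    simpa using this
  have hspan : ⊤ ≤ Submodule.span ℂ (Set.range c) := by
    intro x _
    -- x = a + I • b with a, b ∈ W
    have hWspan : ∀ a : E, σ a = a → a ∈ Submodule.span ℂ (Set.range c) := by
      intro a ha
      have h1 : (⟨a, ha⟩ : W) ∈ (Submodule.span ℝ (Set.range ⇑w.toBasis)) := by
        rw [w.toBasis.span_eq]; trivial
      have h2 : a ∈ (Submodule.span ℝ (Set.range c)) := by
        have := Submodule.mem_map_of_mem (f := W.subtype) h1
        rw [Submodule.map_span] at this
        have heq : W.subtype '' Set.range ⇑w.toBasis = Set.range c := by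
          ext y
          simp only [Set.mem_image, Set.mem_range, exists_exists_eq_and,
            OrthonormalBasis.coe_toBasis]
          rfl
        rwa [heq] at this
      exact Submodule.span_le_restrictScalars ℝ ℂ (Set.range c) h2
    have hσneg : ∀ y, σ (-y) = - σ y := fun y => by
      simpa using hσsmul (-1) y
    have ha : σ ((2 : ℝ)⁻¹ • (x + σ x)) = (2 : ℝ)⁻¹ • (x + σ x) := by
      rw [hrsmul, hσsmul, hσadd, hσinv, Complex.conj_ofReal]
      try rw [add_comm x (σ x)]
    have hb : σ ((-(2 : ℂ)⁻¹ * Complex.I) • (x - σ x)) =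
        (-(2 : ℂ)⁻¹ * Complex.I) • (x - σ x) := by
      rw [hσsmul]
      have h1 : σ (x - σ x) = σ x - x := by
        rw [sub_eq_add_neg, hσadd, hσneg, hσinv, ← sub_eq_add_neg]
      have hc : starRingEnd ℂ (-(2 : ℂ)⁻¹ * Complex.I) = -(-(2 : ℂ)⁻¹ * Complex.I) := by
        rw [map_mul, map_neg, map_inv₀, Complex.conj_I, map_ofNat]
        ring
      rw [h1, hc, neg_smul, ← smul_neg, neg_sub]
    have hx : x = ((2 : ℝ)⁻¹ • (x + σ x)) + Complex.I • ((-(2 : ℂ)⁻¹ * Complex.I) • (x - σ x)) := by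
      rw [hrsmul, smul_smul]
      have h3 : (((2 : ℝ)⁻¹ : ℝ) : ℂ) = (2 : ℂ)⁻¹ := by norm_num
      rw [h3]
      have h4 : Complex.I * (-(2 : ℂ)⁻¹ * Complex.I) = (2 : ℂ)⁻¹ := by
        rw [mul_comm, mul_assoc, Complex.I_mul_I]; ring
      rw [h4, smul_add, smul_sub]
      module
    rw [hx]
    exact Submodule.add_mem _ (hWspan _ ha)
      (Submodule.smul_mem _ _ (hWspan _ hb))
  let bb : Module.Basis (Fin n) ℂ E := Module.Basis.mk hindep hspan
  have hbc : ∀ i, bb i = c i := fun i => by simp [bb]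
  have hcard : n = Module.finrank ℂ E := by
    have := Module.finrank_eq_card_basis bb
    simp [this]
  refine ⟨bb.reindex (finCongr hcard), fun i j => ?_, fun i => ?_⟩
  · rw [Module.Basis.reindex_apply, Module.Basis.reindex_apply, hbc, hbc]
    have := hwg ((finCongr hcard).symm i) ((finCongr hcard).symm j)
    rw [this]
    have hiff : ((finCongr hcard).symm i = (finCongr hcard).symm j) ↔ i = j := by
      constructor
      · intro h; exact (finCongr hcard).symm.injective h
      · intro h; rw [h]
    simp only [hiff]
  · rw [Module.Basis.reindex_apply, hbc]
    exact hWfix _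
end GramFixed


section SemiBasis
variable {M N : Type*} [AddCommGroup M] [Module ℂ M] [AddCommGroup N] [Module ℂ N]

lemma exists_basis_semilinear {ι : Type*} [Fintype ι]
    (e : M ≃ₛₗ[starRingEnd ℂ] N) (b : Module.Basis ι ℂ M) :
    ∃ b' : Module.Basis ι ℂ N, ∀ i, b' i = e (b i) := by
  classical
  have hindep : LinearIndependent ℂ (fun i => e (b i)) := by
    rw [Fintype.linearIndependent_iff]
    intro g hg j
    have h1 : e.symm (∑ i, g i • e (b i)) = 0 := by rw [hg, map_zero]
    rw [map_sum] at h1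
    simp only [LinearEquiv.map_smulₛₗ, LinearEquiv.symm_apply_apply] at h1
    have h2 := Fintype.linearIndependent_iff.mp b.linearIndependent _ h1 j
    have := congrArg (starRingEnd ℂ) h2
    simpa using this
  have hspan : ⊤ ≤ Submodule.span ℂ (Set.range fun i => e (b i)) := by
    have h1 : Set.range (fun i => e (b i)) = (e : M →ₛₗ[starRingEnd ℂ] N) '' Set.range b := by
      rw [← Set.range_comp]; rfl
    rw [h1, ← Submodule.map_span, b.span_eq]
    intro x _
    exact ⟨e.symm x, trivial, e.apply_symm_apply x⟩
  exact ⟨Module.Basis.mk hindep hspan, fun i => by simp⟩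
end SemiBasis
section Conj
variable {V : Type*} [AddCommGroup V] [Module ℝ V]

/-- restriction of conjugation to a semilinear equivalence between submodules. -/
noncomputable def conjRestrict {A B : Submodule ℂ (ℂ ⊗[ℝ] V)}
    (hAB : A.map (conjC V) = B) : ↥A ≃ₛₗ[starRingEnd ℂ] ↥B where
  toFun x := ⟨conjC V x, hAB ▸ Submodule.mem_map_of_mem x.2⟩
  invFun y := ⟨conjC V y, by
    have hy : (y : ℂ ⊗[ℝ] V) ∈ A.map (conjC V) := by rw [hAB]; exact y.2
    obtain ⟨a, ha, hay⟩ := hy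
    rw [← hay, conjC_conjC]; exact ha⟩
  left_inv x := by ext; simp [conjC_conjC]
  right_inv y := by ext; simp [conjC_conjC]
  map_add' x y := by ext; simp
  map_smul' c x := by ext; simp

@[simp] lemma conjRestrict_coe {A B : Submodule ℂ (ℂ ⊗[ℝ] V)}
    (hAB : A.map (conjC V) = B) (x : ↥A) : (conjRestrict hAB x : ℂ ⊗[ℝ] V) = conjC V x := rfl

-- extension lemmas for the complexified form
variable (k : ℤ) (ψ : V →ₗ[ℝ] V →ₗ[ℝ] ℝ)
  (ψc : (ℂ ⊗[ℝ] V) →ₗ[ℂ] (ℂ ⊗[ℝ] V) →ₗ[ℂ] ℂ)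

lemma psic_conj (hExt : ∀ v w : V, ψc (iotaC V v) (iotaC V w) = (ψ v w : ℂ))
    (x y : ℂ ⊗[ℝ] V) :
    ψc (conjC V x) (conjC V y) = starRingEnd ℂ (ψc x y) := by
  induction x using TensorProduct.induction_on with
  | zero => simp
  | add a b ha hb => simp only [map_add, LinearMap.add_apply, ha, hb]
  | tmul z v =>
      induction y using TensorProduct.induction_on with
      | zero => simp
      | add a b ha hb => simp only [map_add, ha, hb]
      | tmul w u =>
          have h1 : (z ⊗ₜ[ℝ] v : ℂ ⊗[ℝ] V) = z • iotaC V v := by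
            rw [iotaC_apply, TensorProduct.smul_tmul', smul_eq_mul, mul_one]
          have h2 : (w ⊗ₜ[ℝ] u : ℂ ⊗[ℝ] V) = w • iotaC V u := by
            rw [iotaC_apply, TensorProduct.smul_tmul', smul_eq_mul, mul_one]
          rw [conjC_tmul, conjC_tmul]
          have h3 : ((starRingEnd ℂ z) ⊗ₜ[ℝ] v : ℂ ⊗[ℝ] V) = starRingEnd ℂ z • iotaC V v := by
            rw [iotaC_apply, TensorProduct.smul_tmul', smul_eq_mul, mul_one]
          have h4 : ((starRingEnd ℂ w) ⊗ₜ[ℝ] u : ℂ ⊗[ℝ] V) = starRingEnd ℂ w • iotaC V u := by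
            rw [iotaC_apply, TensorProduct.smul_tmul', smul_eq_mul, mul_one]
          rw [h1, h2, h3, h4]
          simp only [map_smul, LinearMap.smul_apply, smul_eq_mul, map_mul, hExt,
            Complex.conj_ofReal]
          try ring

lemma psic_swap (hsymm : ∀ v w : V, ψ w v = (-1 : ℝ) ^ k * ψ v w)
    (hExt : ∀ v w : V, ψc (iotaC V v) (iotaC V w) = (ψ v w : ℂ))
    (x y : ℂ ⊗[ℝ] V) :
    ψc y x = (-1 : ℂ) ^ k * ψc x y := by
  induction x using TensorProduct.induction_on with
  | zero => simp
  | add a b ha hb => simp only [map_add, LinearMap.add_apply, ha, hb]; ring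
  | tmul z v =>
      induction y using TensorProduct.induction_on with
      | zero => simp
      | add a b ha hb => simp only [map_add, LinearMap.add_apply, ha, hb]; ring
      | tmul w u =>
          have h1 : (z ⊗ₜ[ℝ] v : ℂ ⊗[ℝ] V) = z • iotaC V v := by
            rw [iotaC_apply, TensorProduct.smul_tmul', smul_eq_mul, mul_one]
          have h2 : (w ⊗ₜ[ℝ] u : ℂ ⊗[ℝ] V) = w • iotaC V u := by
            rw [iotaC_apply, TensorProduct.smul_tmul', smul_eq_mul, mul_one]
          rw [h1, h2]
          simp only [map_smul, LinearMap.smul_apply, smul_eq_mul, hExt]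
          rw [hsymm v u]
          push_cast
          ring

end Conj
section Adapted
variable {V : Type*} [AddCommGroup V] [Module ℝ V] [FiniteDimensional ℝ V]

lemma exists_adapted_basis
    (k : ℤ) (ψ : V →ₗ[ℝ] V →ₗ[ℝ] ℝ)
    (hsymm : ∀ v w : V, ψ w v = (-1 : ℝ) ^ k * ψ v w)
    (ψc : (ℂ ⊗[ℝ] V) →ₗ[ℂ] (ℂ ⊗[ℝ] V) →ₗ[ℂ] ℂ)
    (hExt : ∀ v w : V, ψc (iotaC V v) (iotaC V w) = (ψ v w : ℂ))
    (H : ℤ → Submodule ℂ (ℂ ⊗[ℝ] V))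
    (hConj : ∀ p : ℤ, (H p).map (conjC V) = H (k - p))
    (hHR2 : ∀ p : ℤ, ∀ v ∈ H p, v ≠ 0 →
        0 < (Complex.I ^ (2 * p - k) * ψc v (conjC V v)).re ∧
          (Complex.I ^ (2 * p - k) * ψc v (conjC V v)).im = 0) :
    ∃ b : ∀ p : ℤ, Module.Basis (Fin (Module.finrank ℂ (H p))) ℂ ↥(H p),
      (∀ p i j, ψc ((b p i : ℂ ⊗[ℝ] V)) (conjC V (b p j)) =
          if (i : ℕ) = (j : ℕ) then Complex.I ^ (k - 2 * p) else 0) ∧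
      (∀ p : ℤ, Module.finrank ℂ (H (k - p)) = Module.finrank ℂ (H p)) ∧
      (∀ p (i : Fin (Module.finrank ℂ (H p))) (j : Fin (Module.finrank ℂ (H (k - p)))),
          (j : ℕ) = (i : ℕ) → conjC V ((b p i : ℂ ⊗[ℝ] V)) = (b (k - p) j : ℂ ⊗[ℝ] V)) := by
  classical
  have IpowAdd : ∀ m n : ℤ, Complex.I ^ (m + 4 * n) = Complex.I ^ m := by
    intro m n
    rw [zpow_add₀ Complex.I_ne_zero, zpow_mul]
    norm_num [zpow_ofNat]
  have Iconj : ∀ m : ℤ, starRingEnd ℂ (Complex.I ^ m) = Complex.I ^ (-m) := by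
    intro m
    rw [map_zpow₀, Complex.conj_I, ← Complex.inv_I, inv_zpow, ← zpow_neg]
  have Ineg : ((-1 : ℂ)) ^ k = Complex.I ^ (2 * k) := by
    rw [zpow_mul]
    norm_num [zpow_ofNat]
  have Iinv : ∀ m : ℤ, Complex.I ^ (-m) * Complex.I ^ m = 1 := by
    intro m
    rw [← zpow_add₀ Complex.I_ne_zero]
    simp
  -- hermitian symmetry of the local forms
  have hΦconj : ∀ (p : ℤ) (x y : ↥(H p)),
      starRingEnd ℂ (Complex.I ^ (2 * p - k) * ψc ((x : ℂ ⊗[ℝ] V)) (conjC V (y : ℂ ⊗[ℝ] V)))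
        = Complex.I ^ (2 * p - k) * ψc ((y : ℂ ⊗[ℝ] V)) (conjC V (x : ℂ ⊗[ℝ] V)) := by
    intro p x y
    rw [map_mul, Iconj]
    rw [← psic_conj ψ ψc hExt, conjC_conjC]
    rw [psic_swap k ψ ψc hsymm hExt ((y : ℂ ⊗[ℝ] V)) (conjC V (x : ℂ ⊗[ℝ] V))]
    rw [Ineg, ← mul_assoc, ← zpow_add₀ Complex.I_ne_zero]
    rw [show -(2 * p - k) + 2 * k = (2 * p - k) + 4 * (k - p) by ring, IpowAdd]
  have hΦpos : ∀ (p : ℤ) (x : ↥(H p)), x ≠ 0 →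
      0 < (Complex.I ^ (2 * p - k) * ψc ((x : ℂ ⊗[ℝ] V)) (conjC V (x : ℂ ⊗[ℝ] V))).re :=
    fun p x hx => (hHR2 p x.1 x.2 (fun h => hx (Subtype.ext h))).1
  have hΦadd : ∀ (p : ℤ) (x y z : ↥(H p)),
      Complex.I ^ (2 * p - k) * ψc (((y + z : ↥(H p)) : ℂ ⊗[ℝ] V)) (conjC V (x : ℂ ⊗[ℝ] V))
        = Complex.I ^ (2 * p - k) * ψc ((y : ℂ ⊗[ℝ] V)) (conjC V (x : ℂ ⊗[ℝ] V))
          + Complex.I ^ (2 * p - k) * ψc ((z : ℂ ⊗[ℝ] V)) (conjC V (x : ℂ ⊗[ℝ] V)) := by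
    intro p x y z
    rw [Submodule.coe_add, map_add, LinearMap.add_apply, mul_add]
  have hΦsmul : ∀ (p : ℤ) (c : ℂ) (x y : ↥(H p)),
      Complex.I ^ (2 * p - k) * ψc (((c • y : ↥(H p)) : ℂ ⊗[ℝ] V)) (conjC V (x : ℂ ⊗[ℝ] V))
        = c * (Complex.I ^ (2 * p - k) * ψc ((y : ℂ ⊗[ℝ] V)) (conjC V (x : ℂ ⊗[ℝ] V))) := by
    intro p c x y
    rw [Submodule.coe_smul, map_smul, LinearMap.smul_apply, smul_eq_mul]
    ring
  -- Stage 1: bases for p with k ≤ 2p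
  have mainPlus : ∀ p : ℤ, k ≤ 2 * p →
      ∃ b : Module.Basis (Fin (Module.finrank ℂ (H p))) ℂ ↥(H p),
        (∀ i j, Complex.I ^ (2 * p - k) *
            ψc ((b j : ℂ ⊗[ℝ] V)) (conjC V (b i : ℂ ⊗[ℝ] V)) = if i = j then 1 else 0) ∧
        (2 * p = k → ∀ i, conjC V ((b i : ℂ ⊗[ℝ] V)) = (b i : ℂ ⊗[ℝ] V)) := by
    intro p hp
    rcases eq_or_lt_of_le hp with heq | _
    · -- middle case : 2p = k, conjugation-stable piece
      have hself : (H p).map (conjC V) = H p := by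
        have h0 := hConj p
        rwa [show k - p = p by omega] at h0
      set σe := conjRestrict hself with hσe
      have he0 : 2 * p - k = 0 := by omega
      obtain ⟨b, hb1, hb2⟩ := exists_gram_basis_fixed
        (fun u v : ↥(H p) => Complex.I ^ (2 * p - k) *
          ψc ((v : ℂ ⊗[ℝ] V)) (conjC V (u : ℂ ⊗[ℝ] V)))
        (fun x y z => hΦadd p x y z) (fun c x y => hΦsmul p c x y)
        (fun x y => hΦconj p x y) (fun x => hΦpos p x)
        (fun x => σe x)
        (fun x y => map_add σe x y)
        (fun c x => σe.map_smulₛₗ c x)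
        (fun x => Subtype.ext (by
          show (conjC V) ((conjC V) (x : ℂ ⊗[ℝ] V)) = (x : ℂ ⊗[ℝ] V)
          exact conjC_conjC _))
        (by
          intro x y
          show Complex.I ^ (2 * p - k) *
              ψc ((σe y : ℂ ⊗[ℝ] V)) (conjC V (σe x : ℂ ⊗[ℝ] V)) =
            starRingEnd ℂ (Complex.I ^ (2 * p - k) *
              ψc ((y : ℂ ⊗[ℝ] V)) (conjC V (x : ℂ ⊗[ℝ] V)))
          rw [conjRestrict_coe, conjRestrict_coe, conjC_conjC, map_mul, Iconj]
          rw [← psic_conj ψ ψc hExt, conjC_conjC, he0]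
          norm_num)
      refine ⟨b, fun i j => hb1 i j, fun _ i => ?_⟩
      have := hb2 i
      exact congrArg Subtype.val this
    · obtain ⟨b, hb⟩ := exists_gram_basis
        (fun u v : ↥(H p) => Complex.I ^ (2 * p - k) *
          ψc ((v : ℂ ⊗[ℝ] V)) (conjC V (u : ℂ ⊗[ℝ] V)))
        (fun x y z => hΦadd p x y z) (fun c x y => hΦsmul p c x y)
        (fun x y => hΦconj p x y) (fun x => hΦpos p x)
      exact ⟨b, fun i j => hb i j, fun h => absurd h (by omega)⟩
  choose bP hPgram hPfix using mainPlus
  -- Gram condition in the convenient form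
  have hGramP : ∀ (p : ℤ) (h : k ≤ 2 * p) i j,
      ψc ((bP p h i : ℂ ⊗[ℝ] V)) (conjC V (bP p h j : ℂ ⊗[ℝ] V)) =
        if (i : ℕ) = (j : ℕ) then Complex.I ^ (k - 2 * p) else 0 := by
    intro p h i j
    have h2 := hPgram p h j i
    have h3 : ψc ((bP p h i : ℂ ⊗[ℝ] V)) (conjC V (bP p h j : ℂ ⊗[ℝ] V))
        = Complex.I ^ (k - 2 * p) *
          (Complex.I ^ (2 * p - k) *
            ψc ((bP p h i : ℂ ⊗[ℝ] V)) (conjC V (bP p h j : ℂ ⊗[ℝ] V))) := by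
      rw [← mul_assoc, show k - 2 * p = -(2 * p - k) by ring, Iinv, one_mul]
    rw [h3, h2]
    by_cases hij : (i : ℕ) = (j : ℕ)
    · have : j = i := Fin.ext hij.symm
      simp [this]
    · have : ¬ j = i := fun hc => hij (congrArg Fin.val hc).symm
      simp [this, hij]
  -- Stage 2: transported bases for p with 2p < k
  have mainMinus : ∀ (p : ℤ) (_hp : 2 * p < k),
      ∃ c : Module.Basis (Fin (Module.finrank ℂ (H (k - p)))) ℂ ↥(H p),
        ∀ i, ((c i : ℂ ⊗[ℝ] V)) = conjC V ((bP (k - p) (by omega) i : ℂ ⊗[ℝ] V)) := by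
    intro p hp
    have h1 : (H (k - p)).map (conjC V) = H p := by
      have h0 := hConj (k - p)
      rwa [show k - (k - p) = p by omega] at h0
    obtain ⟨c, hc⟩ := exists_basis_semilinear (conjRestrict h1) (bP (k - p) (by omega))
    refine ⟨c, fun i => ?_⟩
    rw [hc i]
    rfl
  choose cM hcM using mainMinus
  -- dimension symmetry
  have hd : ∀ p : ℤ, Module.finrank ℂ (H (k - p)) = Module.finrank ℂ (H p) := by
    intro p
    rcases lt_trichotomy (2 * p) k with h | h | h
    · have h1 := Module.finrank_eq_card_basis (cM p h)
      simpa using h1.symm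
    · rw [show k - p = p by omega]
    · have h2 : 2 * (k - p) < k := by omega
      have h1 := Module.finrank_eq_card_basis (cM (k - p) h2)
      rw [show k - (k - p) = p by omega] at h1
      simpa using h1
  -- assemble the family
  let b : ∀ p : ℤ, Module.Basis (Fin (Module.finrank ℂ (H p))) ℂ ↥(H p) := fun p =>
    if h : k ≤ 2 * p then bP p h
    else (cM p (by omega)).reindex (finCongr (hd p))
  have hbplus : ∀ (p : ℤ) (h : k ≤ 2 * p), b p = bP p h := fun p h => dif_pos h
  have hbminus : ∀ (p : ℤ) (h : ¬ k ≤ 2 * p) i,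
      ((b p i : ℂ ⊗[ℝ] V)) =
        conjC V ((bP (k - p) (by omega) ((finCongr (hd p)).symm i) : ℂ ⊗[ℝ] V)) := by
    intro p h i
    have hbp : b p = (cM p (by omega : 2 * p < k)).reindex (finCongr (hd p)) := dif_neg h
    rw [hbp, Module.Basis.reindex_apply]
    exact hcM p (by omega) _
  have hcast : ∀ (p : ℤ) (i : Fin (Module.finrank ℂ (H p))),
      (((finCongr (hd p)).symm i : Fin (Module.finrank ℂ (H (k - p)))) : ℕ) = (i : ℕ) :=
    fun p i => rfl
  -- congruence of bP across equal indices
  have bPcong : ∀ (q q' : ℤ) (hq : k ≤ 2 * q) (hq' : k ≤ 2 * q') (e : q = q')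
      (i : Fin (Module.finrank ℂ (H q))) (j : Fin (Module.finrank ℂ (H q'))),
      (i : ℕ) = (j : ℕ) → ((bP q hq i : ℂ ⊗[ℝ] V)) = ((bP q' hq' j : ℂ ⊗[ℝ] V)) := by
    intro q q' hq hq' e
    subst e
    intro i j hij
    have : i = j := Fin.ext hij
    subst this
    rfl
  refine ⟨b, ?_, hd, ?_⟩
  · -- Gram property
    intro p i j
    by_cases h : k ≤ 2 * p
    · rw [hbplus p h]
      exact hGramP p h i j
    · have hq : k ≤ 2 * (k - p) := by omega
      rw [hbminus p h i, hbminus p h j, conjC_conjC]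
      -- drop a conjugation back in
      rw [show ((bP (k - p) (by omega : k ≤ 2 * (k - p)) ((finCongr (hd p)).symm j)
          : ℂ ⊗[ℝ] V))
        = conjC V (conjC V ((bP (k - p) (by omega : k ≤ 2 * (k - p))
            ((finCongr (hd p)).symm j) : ℂ ⊗[ℝ] V))) from (conjC_conjC _).symm]
      rw [psic_conj ψ ψc hExt]
      rw [hGramP (k - p) (by omega) ((finCongr (hd p)).symm i) ((finCongr (hd p)).symm j)]
      rw [apply_ite (starRingEnd ℂ), map_zero, Iconj]
      rw [show -(k - 2 * (k - p)) = k - 2 * p by ring]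
      congr 1
  · -- conjugation compatibility
    intro p i j hij
    rcases lt_trichotomy (2 * p) k with h | h | h
    · -- 2p < k
      have hnp : ¬ k ≤ 2 * p := by omega
      have hq : k ≤ 2 * (k - p) := by omega
      rw [hbminus p hnp i, conjC_conjC, hbplus (k - p) hq]
      exact bPcong (k - p) (k - p) (by omega) hq rfl _ j (by rw [hcast, hij])
    · -- 2p = k
      have hp : k ≤ 2 * p := by omega
      have hq : k ≤ 2 * (k - p) := by omega
      rw [hbplus p hp, hPfix p hp (by omega) i, hbplus (k - p) hq]
      exact bPcong p (k - p) hp hq (by omega) i j hij.symm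
    · -- 2p > k
      have hp : k ≤ 2 * p := by omega
      have hnq : ¬ k ≤ 2 * (k - p) := by omega
      rw [hbplus p hp, hbminus (k - p) hnq j]
      rw [show (bP (k - (k - p)) (by omega : k ≤ 2 * (k - (k - p)))
          ((finCongr (hd (k - p))).symm j) : ℂ ⊗[ℝ] V)
        = (bP p hp i : ℂ ⊗[ℝ] V) from
          bPcong (k - (k - p)) p (by omega) hp (by omega) _ i (by rw [hcast, hij])]
end Adapted

set_option maxHeartbeats 2000000 in
/-- Let `V` be a finite-dimensional real vector space, `k` an integer,
and `ψ` a bilinear form on `V` with `ψ(w,v) = (-1)^k ψ(v,w)` (with complex-bilinear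
extension `ψc` to `V_ℂ = ℂ ⊗[ℝ] V`).  Suppose `H` and `H'` are two Hodge structures of
weight `k` on `V`, both polarized by `ψ`, with the same Hodge numbers.  Then some
real-linear isometry of `(V, ψ)` has complexification carrying `V^{p,q}` onto `W^{p,q}`
for every `(p,q)`: the real isometry group `G_ℝ` acts transitively on the period
domain `D`. -/
theorem stmt10 {V : Type*} [AddCommGroup V] [Module ℝ V] [FiniteDimensional ℝ V]
    (k : ℤ)
    (ψ : V →ₗ[ℝ] V →ₗ[ℝ] ℝ)
    (hsymm : ∀ v w : V, ψ w v = (-1 : ℝ) ^ k * ψ v w)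
    (ψc : (ℂ ⊗[ℝ] V) →ₗ[ℂ] (ℂ ⊗[ℝ] V) →ₗ[ℂ] ℂ)
    (hExt : ∀ v w : V, ψc (iotaC V v) (iotaC V w) = (ψ v w : ℂ))
    (H H' : ℤ → Submodule ℂ (ℂ ⊗[ℝ] V))
    (hInternal : DirectSum.IsInternal H) (hInternal' : DirectSum.IsInternal H')
    (hFinite : {p : ℤ | H p ≠ ⊥}.Finite) (hFinite' : {p : ℤ | H' p ≠ ⊥}.Finite)
    (hConj : ∀ p : ℤ, (H p).map (conjC V) = H (k - p))
    (hConj' : ∀ p : ℤ, (H' p).map (conjC V) = H' (k - p))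
    (hHR1 : ∀ p r : ℤ, r ≠ k - p → ∀ v ∈ H p, ∀ w ∈ H r, ψc v w = 0)
    (hHR1' : ∀ p r : ℤ, r ≠ k - p → ∀ v ∈ H' p, ∀ w ∈ H' r, ψc v w = 0)
    (hHR2 : ∀ p : ℤ, ∀ v ∈ H p, v ≠ 0 →
        0 < (Complex.I ^ (2 * p - k) * ψc v (conjC V v)).re ∧
          (Complex.I ^ (2 * p - k) * ψc v (conjC V v)).im = 0)
    (hHR2' : ∀ p : ℤ, ∀ v ∈ H' p, v ≠ 0 →
        0 < (Complex.I ^ (2 * p - k) * ψc v (conjC V v)).re ∧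
          (Complex.I ^ (2 * p - k) * ψc v (conjC V v)).im = 0)
    (hdim : ∀ p : ℤ, Module.finrank ℂ (H p) = Module.finrank ℂ (H' p)) :
    ∃ g : V ≃ₗ[ℝ] V,
      (∀ v w : V, ψ (g v) (g w) = ψ v w) ∧
      ∀ p : ℤ, (H p).map (LinearMap.baseChange ℂ (g : V →ₗ[ℝ] V)) = H' p := by
  classical
  obtain ⟨e, eGram, ed, eConj⟩ :=
    exists_adapted_basis k ψ hsymm ψc hExt H hConj hHR2
  obtain ⟨f, fGram, fd, fConj⟩ :=
    exists_adapted_basis k ψ hsymm ψc hExt H' hConj' hHR2'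
  set E := hInternal.collectedBasis e with hE
  set F := hInternal'.collectedBasis f with hF
  have hEcoe : ∀ a : Σ p : ℤ, Fin (Module.finrank ℂ (H p)),
      E a = ((e a.1 a.2 : ℂ ⊗[ℝ] V)) := fun a => by
    rw [hE, hInternal.collectedBasis_coe]
  have hFcoe : ∀ a : Σ p : ℤ, Fin (Module.finrank ℂ (H' p)),
      F a = ((f a.1 a.2 : ℂ ⊗[ℝ] V)) := fun a => by
    rw [hF, hInternal'.collectedBasis_coe]
  let σidx : (Σ p : ℤ, Fin (Module.finrank ℂ (H p))) ≃
      (Σ p : ℤ, Fin (Module.finrank ℂ (H' p))) :=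
    Equiv.sigmaCongrRight (fun p => finCongr (hdim p))
  let gc : (ℂ ⊗[ℝ] V) ≃ₗ[ℂ] (ℂ ⊗[ℝ] V) := E.equiv F σidx
  have hgcE : ∀ a, gc (E a) = F (σidx a) := fun a => E.equiv_apply a F σidx
  have hgc_basis : ∀ (p : ℤ) (i : Fin (Module.finrank ℂ (H p))),
      gc ((e p i : ℂ ⊗[ℝ] V)) = ((f p (finCongr (hdim p) i) : ℂ ⊗[ℝ] V)) := by
    intro p i
    have h1 := hgcE ⟨p, i⟩
    rw [hEcoe ⟨p, i⟩, hFcoe (σidx ⟨p, i⟩)] at h1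
    exact h1
  -- gc commutes with conjugation
  have hcomm : ∀ x, gc (conjC V x) = conjC V (gc x) := by
    have hext : ((gc : (ℂ ⊗[ℝ] V) →ₗ[ℂ] (ℂ ⊗[ℝ] V)).comp (conjC V) :
          (ℂ ⊗[ℝ] V) →ₛₗ[starRingEnd ℂ] (ℂ ⊗[ℝ] V))
        = (conjC V).comp (gc : (ℂ ⊗[ℝ] V) →ₗ[ℂ] (ℂ ⊗[ℝ] V)) := by
      apply Module.Basis.ext E
      rintro ⟨p, i⟩
      simp only [LinearMap.coe_comp, Function.comp_apply, LinearEquiv.coe_coe]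
      rw [hEcoe ⟨p, i⟩]
      have hjlt : (i : ℕ) < Module.finrank ℂ (H (k - p)) := by
        rw [ed p]; exact i.2
      set j : Fin (Module.finrank ℂ (H (k - p))) := ⟨(i : ℕ), hjlt⟩
      have h1 : conjC V ((e p i : ℂ ⊗[ℝ] V)) = ((e (k - p) j : ℂ ⊗[ℝ] V)) :=
        eConj p i j rfl
      rw [h1, hgc_basis (k - p) j, hgc_basis p i]
      have hj'lt : ((finCongr (hdim p) i : Fin (Module.finrank ℂ (H' p))) : ℕ)
          < Module.finrank ℂ (H' (k - p)) := by
        rw [fd p]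
        exact (finCongr (hdim p) i).2
      set j' : Fin (Module.finrank ℂ (H' (k - p))) := ⟨_, hj'lt⟩
      have h2 : conjC V ((f p (finCongr (hdim p) i) : ℂ ⊗[ℝ] V))
          = ((f (k - p) j' : ℂ ⊗[ℝ] V)) := fConj p (finCongr (hdim p) i) j' rfl
      rw [h2]
      all_goals (congr 1 <;> exact Fin.ext rfl)
    intro x
    have := DFunLike.congr_fun hext x
    simpa using this
  -- gc preserves the form
  have key : ∀ (K : ℤ → Submodule ℂ (ℂ ⊗[ℝ] V)) (dK : ℤ → ℕ)
      (g : ∀ p : ℤ, Fin (dK p) → ℂ ⊗[ℝ] V),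
      (∀ p r : ℤ, r ≠ k - p → ∀ v ∈ K p, ∀ w ∈ K r, ψc v w = 0) →
      (∀ p i, g p i ∈ K p) →
      (∀ p i j, ψc (g p i) (conjC V (g p j)) =
          if (i : ℕ) = (j : ℕ) then Complex.I ^ (k - 2 * p) else 0) →
      (∀ p, dK (k - p) = dK p) →
      (∀ p (i : Fin (dK p)) (j : Fin (dK (k - p))), (j : ℕ) = (i : ℕ) →
          conjC V (g p i) = g (k - p) j) →
      ∀ (p r : ℤ) (i : Fin (dK p)) (j : Fin (dK r)),
        ψc (g p i) (g r j) =
          if r = k - p ∧ (i : ℕ) = (j : ℕ) then Complex.I ^ (k - 2 * p) else 0 := by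
    intro K dK g hr1 hmem hgram hdK hconjg p r i j
    by_cases hr : r = k - p
    · subst hr
      have hj0 : (j : ℕ) < dK p := by rw [← hdK p]; exact j.2
      have h1 : conjC V (g p ⟨(j : ℕ), hj0⟩) = g (k - p) j := hconjg p ⟨(j : ℕ), hj0⟩ j rfl
      rw [← h1, hgram p i ⟨(j : ℕ), hj0⟩]
      by_cases hij : (i : ℕ) = (j : ℕ)
      · rw [if_pos hij, if_pos ⟨rfl, hij⟩]
      · rw [if_neg hij, if_neg (by tauto)]
    · rw [hr1 p r hr _ (hmem p i) _ (hmem r j), if_neg (by tauto)]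
  have keyH := key H (fun p => Module.finrank ℂ (H p)) (fun p i => ((e p i : ℂ ⊗[ℝ] V)))
    hHR1 (fun p i => (e p i).2) eGram ed eConj
  have keyH' := key H' (fun p => Module.finrank ℂ (H' p)) (fun p i => ((f p i : ℂ ⊗[ℝ] V)))
    hHR1' (fun p i => (f p i).2) fGram fd fConj
  have hpsi : ∀ x y, ψc (gc x) (gc y) = ψc x y := by
    have hext : (ψc.compl₁₂ (gc : (ℂ ⊗[ℝ] V) →ₗ[ℂ] (ℂ ⊗[ℝ] V))
        (gc : (ℂ ⊗[ℝ] V) →ₗ[ℂ] (ℂ ⊗[ℝ] V))) = ψc := by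
      apply Module.Basis.ext E
      rintro ⟨p, i⟩
      apply Module.Basis.ext E
      rintro ⟨r, j⟩
      rw [LinearMap.compl₁₂_apply]
      simp only [LinearEquiv.coe_coe]
      rw [hEcoe ⟨p, i⟩, hEcoe ⟨r, j⟩, hgc_basis p i, hgc_basis r j]
      rw [keyH p r i j, keyH' p r (finCongr (hdim p) i) (finCongr (hdim r) j)]
      rfl
    intro x y
    have h1 := DFunLike.congr_fun (DFunLike.congr_fun hext x) y
    simpa using h1
  -- gc maps H p onto H' p
  have hgcH : ∀ p : ℤ, (H p).map (gc : (ℂ ⊗[ℝ] V) →ₗ[ℂ] (ℂ ⊗[ℝ] V)) = H' p := by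
    intro p
    have hspanH : H p = Submodule.span ℂ (Set.range fun i => ((e p i : ℂ ⊗[ℝ] V))) := by
      conv_lhs => rw [← Submodule.map_subtype_top (H p), ← (e p).span_eq]
      rw [Submodule.map_span]
      congr 1
      rw [← Set.range_comp]
      rfl
    have hspanH' : H' p = Submodule.span ℂ (Set.range fun i => ((f p i : ℂ ⊗[ℝ] V))) := by
      conv_lhs => rw [← Submodule.map_subtype_top (H' p), ← (f p).span_eq]
      rw [Submodule.map_span]
      congr 1
      rw [← Set.range_comp]
      rfl
    rw [hspanH, Submodule.map_span, hspanH']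
    congr 1
    rw [← Set.range_comp]
    have : ((gc : (ℂ ⊗[ℝ] V) →ₗ[ℂ] (ℂ ⊗[ℝ] V)) ∘ fun i => ((e p i : ℂ ⊗[ℝ] V)))
        = (fun i => ((f p i : ℂ ⊗[ℝ] V))) ∘ (finCongr (hdim p)) := by
      funext i
      exact hgc_basis p i
    rw [this, Set.range_comp, (finCongr (hdim p)).range_eq_univ, Set.image_univ]
  -- descend to a real automorphism
  have hfix : ∀ v : V, conjC V (gc (iotaC V v)) = gc (iotaC V v) := fun v => by
    rw [← hcomm, conjC_iotaC]
  let g0 : V →ₗ[ℝ] V :=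
    (reC V) ∘ₗ (((gc : (ℂ ⊗[ℝ] V) →ₗ[ℂ] (ℂ ⊗[ℝ] V)).restrictScalars ℝ) ∘ₗ (iotaC V))
  have hg0 : ∀ v, iotaC V (g0 v) = gc (iotaC V v) := fun v =>
    iotaC_reC_of_fixed (hfix v)
  have hinj : Function.Injective g0 := by
    intro a c h
    have h1 : gc (iotaC V a) = gc (iotaC V c) := by
      rw [← hg0, ← hg0, h]
    have h2 : iotaC V a = iotaC V c := gc.injective h1
    exact iotaC_injective h2
  have hbij : Function.Bijective g0 :=
    ⟨hinj, (LinearMap.injective_iff_surjective).mp hinj⟩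
  refine ⟨LinearEquiv.ofBijective g0 hbij, ?_, ?_⟩
  · intro v w
    have h1 : ((ψ (g0 v) (g0 w) : ℝ) : ℂ) = ((ψ v w : ℝ) : ℂ) := by
      rw [← hExt, ← hExt, hg0, hg0, hpsi]
    exact_mod_cast h1
  · intro p
    have hbase : LinearMap.baseChange ℂ ((LinearEquiv.ofBijective g0 hbij : V ≃ₗ[ℝ] V)
        : V →ₗ[ℝ] V) = (gc : (ℂ ⊗[ℝ] V) →ₗ[ℂ] (ℂ ⊗[ℝ] V)) := by
      apply LinearMap.ext
      intro x
      induction x using TensorProduct.induction_on with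
      | zero => simp
      | add a c ha hc => simp only [map_add, ha, hc]
      | tmul z v =>
          rw [LinearMap.baseChange_tmul]
          have h1 : (z ⊗ₜ[ℝ] v : ℂ ⊗[ℝ] V) = z • iotaC V v := by
            rw [iotaC_apply, TensorProduct.smul_tmul', smul_eq_mul, mul_one]
          have h2 : (z ⊗ₜ[ℝ] (g0 v) : ℂ ⊗[ℝ] V) = z • iotaC V (g0 v) := by
            rw [iotaC_apply, TensorProduct.smul_tmul', smul_eq_mul, mul_one]
          show (z ⊗ₜ[ℝ] (g0 v) : ℂ ⊗[ℝ] V) = gc (z ⊗ₜ[ℝ] v)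
          rw [h2, h1, map_smul, hg0]
    rw [hbase]
    exact hgcH p
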